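/- arXiv:1402.0433 — 3 statements merged into one kernel-verified Lean document; each statement's English description precedes it below -/
import Mathlib

section
/- For any nonnegative integers $n$ and $k$, the 2-adic valuation of $\Phi_n(k) = \frac{1}{n!}\sum_i \binom{n}{2i+1}(2i)^k$ is nonnegative. -/
/-- `Φ n k = (1/n!) ∑_i C(n, 2i+1) (2i)^k`, with the convention `0^0 = 1`. -/
def Phi (n k : ℕ) : ℚ :=
  (1 / (Nat.factorial n : ℚ)) *
    ∑ i ∈ Finset.range (n + 1), (Nat.choose n (2 * i + 1) : ℚ) * ((2 * i : ℕ) : ℚ) ^ k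

/-- Companion sum with even binomial indices. -/
def Psi (n k : ℕ) : ℚ :=
  (1 / (Nat.factorial n : ℚ)) *
    ∑ i ∈ Finset.range (n + 1), (Nat.choose n (2 * i) : ℚ) * ((2 * i : ℕ) : ℚ) ^ k

/-- rationals with odd denominator -/
def Good (q : ℚ) : Prop := ∃ a b : ℤ, Odd b ∧ q = a / b

lemma Good.zero : Good 0 := ⟨0, 1, odd_one, by norm_num⟩

lemma Good.intCast (z : ℤ) : Good (z : ℚ) := ⟨z, 1, odd_one, by norm_num⟩

lemma Odd.int_ne_zero {b : ℤ} (hb : Odd b) : b ≠ 0 := by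
  rintro rfl; exact ((Int.not_odd_iff_even.mpr Even.zero)) hb

lemma Good.add {q r : ℚ} (hq : Good q) (hr : Good r) : Good (q + r) := by
  obtain ⟨a, b, hb, rfl⟩ := hq
  obtain ⟨c, d, hd, rfl⟩ := hr
  refine ⟨a * d + c * b, b * d, hb.mul hd, ?_⟩
  have hb0 : (b : ℚ) ≠ 0 := Int.cast_ne_zero.mpr hb.int_ne_zero
  have hd0 : (d : ℚ) ≠ 0 := Int.cast_ne_zero.mpr hd.int_ne_zero
  field_simp
  push_cast; ring

lemma Good.neg {q : ℚ} (hq : Good q) : Good (-q) := by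
  obtain ⟨a, b, hb, rfl⟩ := hq
  exact ⟨-a, b, hb, by push_cast; ring⟩

lemma Good.sub {q r : ℚ} (hq : Good q) (hr : Good r) : Good (q - r) := by
  rw [sub_eq_add_neg]; exact hq.add hr.neg

lemma Good.mul {q r : ℚ} (hq : Good q) (hr : Good r) : Good (q * r) := by
  obtain ⟨a, b, hb, rfl⟩ := hq
  obtain ⟨c, d, hd, rfl⟩ := hr
  exact ⟨a * c, b * d, hb.mul hd, by push_cast; ring⟩

lemma Good.sum {s : Finset ℕ} {f : ℕ → ℚ} (h : ∀ i ∈ s, Good (f i)) :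
    Good (∑ i ∈ s, f i) := by
  classical
  induction s using Finset.induction_on with
  | empty => simpa using Good.zero
  | insert _ _ hx ih =>
    rw [Finset.sum_insert hx]
    exact (h _ (Finset.mem_insert_self _ _)).add
      (ih fun i hi => h i (Finset.mem_insert_of_mem hi))

/-- key base-case estimate : `2^n / (n+1)!` has odd denominator. -/
lemma good_pow_div_factorial (n : ℕ) :
    Good ((2 : ℚ) ^ n / (Nat.factorial (n + 1) : ℚ)) := by
  haveI : Fact (Nat.Prime 2) := ⟨Nat.prime_two⟩
  set v := padicValNat 2 (Nat.factorial (n + 1)) with hv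
  set m := (Nat.factorial (n + 1)) / 2 ^ v with hm
  have hfac : Nat.factorial (n + 1) = 2 ^ v * m := by
    rw [hm, Nat.mul_div_cancel' (pow_padicValNat_dvd)]
  have hmodd : Odd m := by
    rcases Nat.even_or_odd m with he | ho
    · exfalso
      obtain ⟨c, hc⟩ := he
      have h2 : 2 ^ (v + 1) ∣ Nat.factorial (n + 1) := by
        refine ⟨c, ?_⟩
        rw [hfac, hc]; ring
      have := (padicValNat_dvd_iff_le (p := 2) (Nat.factorial_ne_zero _)).mp h2
      omega
    · exact ho
  have hvle : v ≤ n := by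
    have hleg := sub_one_mul_padicValNat_factorial (p := 2) (n + 1)
    have hds : 1 ≤ ((Nat.digits 2 (n + 1)).sum) := by
      have hne := (Nat.digits_ne_nil_iff_ne_zero (b := 2)).mpr (Nat.succ_ne_zero n)
      have hlast := Nat.getLast_digit_ne_zero 2 (Nat.succ_ne_zero n)
      have hmem := List.getLast_mem hne
      have hle := List.single_le_sum (l := Nat.digits 2 (n + 1))
        (fun x _ => Nat.zero_le x) _ hmem
      omega
    omega
  have hmne : m ≠ 0 := by rcases hmodd with ⟨c, hc⟩; omega
  refine ⟨2 ^ (n - v), m, by exact_mod_cast hmodd, ?_⟩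
  have hm0 : (m : ℚ) ≠ 0 := Nat.cast_ne_zero.mpr hmne
  have h2v : (2 : ℚ) ^ n = 2 ^ (n - v) * 2 ^ v := by
    rw [← pow_add]; congr 1; omega
  rw [h2v, hfac]
  push_cast
  rw [div_eq_div_iff (by positivity) (by exact_mod_cast hm0)]
  ring

open Finset in
/-- recurrence for the odd-index binomial sum -/
lemma O_succ (n : ℕ) :
    (∑ i ∈ range (n+2), ((n+1).choose (2*i+1))) =
    (∑ i ∈ range (n+1), (n.choose (2*i))) + (∑ i ∈ range (n+1), (n.choose (2*i+1))) := by
  rw [Finset.sum_range_succ]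
  have h0 : (n+1).choose (2*(n+1)+1) = 0 := Nat.choose_eq_zero_of_lt (by omega)
  rw [h0, add_zero]
  rw [Finset.sum_congr rfl (fun i _ => Nat.choose_succ_succ n (2*i))]
  exact Finset.sum_add_distrib

open Finset in
/-- recurrence for the even-index binomial sum -/
lemma E_succ (n : ℕ) :
    (∑ i ∈ range (n+2), ((n+1).choose (2*i))) =
    (∑ i ∈ range (n+1), (n.choose (2*i))) + (∑ i ∈ range (n+1), (n.choose (2*i+1))) := by
  rw [Finset.sum_range_succ']
  have h1 : ∀ i, (n+1).choose (2*(i+1)) = n.choose (2*i+1) + n.choose (2*i+2) := by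
    intro i
    rw [show 2*(i+1) = (2*i+1)+1 by ring]
    exact Nat.choose_succ_succ n (2*i+1)
  rw [Finset.sum_congr rfl (fun i _ => h1 i), Finset.sum_add_distrib]
  have h2 : (∑ i ∈ range (n+1), n.choose (2*i+2)) + (n+1).choose (2*0)
      = ∑ i ∈ range (n+1), (n.choose (2*i)) := by
    have h3 : ∑ i ∈ range (n+1), n.choose (2*i+2) = ∑ i ∈ range n, n.choose (2*(i+1)) := by
      rw [Finset.sum_range_succ]
      rw [Nat.choose_eq_zero_of_lt (show n < 2*n+2 by omega)]
      rw [add_zero]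
      exact Finset.sum_congr rfl (fun i _ => by rw [show 2*(i+1) = 2*i+2 by ring])
    rw [h3, Nat.choose_zero_right]
    rw [Finset.sum_range_succ' (fun i => n.choose (2*i)) n]
    simp
  omega

open Finset in
lemma EO_vals : ∀ n : ℕ,
    (∑ i ∈ range (n+1), (n.choose (2*i))) + (∑ i ∈ range (n+1), (n.choose (2*i+1))) = 2^n ∧
    (∑ i ∈ range (n+1), (n.choose (2*i)))
      = (∑ i ∈ range (n+1), (n.choose (2*i+1))) + (if n = 0 then 1 else 0) := by
  intro n
  induction n with
  | zero => simp
  | succ n ih =>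
    obtain ⟨h1, h2⟩ := ih
    constructor
    · rw [E_succ, O_succ]
      rw [pow_succ]
      omega
    · rw [E_succ, O_succ]
      simp

open Finset in
lemma O_val (n : ℕ) : (∑ i ∈ range (n+2), ((n+1).choose (2*i+1))) = 2^n := by
  obtain ⟨h1, h2⟩ := EO_vals n
  rw [O_succ]
  by_cases h : n = 0
  · subst h; simp
  · simp [h] at h2; omega

open Finset in
lemma E_val (n : ℕ) : (∑ i ∈ range (n+2), ((n+1).choose (2*i))) = 2^n := by
  rw [E_succ, ← O_succ, O_val]

lemma Phi_zero (k : ℕ) : Phi 0 k = 0 := by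
  simp [Phi]

lemma Psi_zero_succ (k : ℕ) : Psi 0 (k+1) = 0 := by
  simp [Psi]

lemma Psi_zero_zero : Psi 0 0 = 1 := by
  simp [Psi]

lemma Phi_base (n : ℕ) : Phi (n+1) 0 = (2:ℚ)^n / (Nat.factorial (n+1) : ℚ) := by
  unfold Phi
  simp only [pow_zero, mul_one]
  rw [← Nat.cast_sum]
  rw [O_val n]
  push_cast
  ring

lemma Psi_base (n : ℕ) : Psi (n+1) 0 = (2:ℚ)^n / (Nat.factorial (n+1) : ℚ) := by
  unfold Psi
  simp only [pow_zero, mul_one]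
  rw [← Nat.cast_sum]
  rw [E_val n]
  push_cast
  ring

lemma Phi_rec (n k : ℕ) : Phi (n+1) (k+1) = Psi n k - Phi (n+1) k := by
  have key : ∀ i : ℕ, ((n+1).choose (2*i+1) : ℚ) * ((2*i : ℕ) : ℚ)^(k+1)
      = (n+1 : ℚ) * ((n.choose (2*i) : ℚ) * ((2*i:ℕ):ℚ)^k)
        - ((n+1).choose (2*i+1) : ℚ) * ((2*i:ℕ):ℚ)^k := by
    intro i
    have hnat : (n+1) * n.choose (2*i) = (n+1).choose (2*i+1) * (2*i+1) :=
      Nat.add_one_mul_choose_eq n (2*i)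
    have hq : ((n+1 : ℕ) : ℚ) * (n.choose (2*i) : ℚ)
        = ((n+1).choose (2*i+1) : ℚ) * ((2*i+1 : ℕ) : ℚ) := by exact_mod_cast congrArg (Nat.cast (R := ℚ)) hnat
    push_cast at hq ⊢
    linear_combination (-((2:ℚ)*i)^k) * hq
  unfold Phi Psi
  rw [Finset.sum_congr rfl (fun i _ => key i)]
  rw [Finset.sum_sub_distrib, ← Finset.mul_sum]
  rw [Finset.sum_range_succ ((fun i => (n.choose (2*i) : ℚ) * ((2*i:ℕ):ℚ)^k)) (n+1)]
  have hz : ((n.choose (2*(n+1)) : ℕ) : ℚ) = 0 := by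
    norm_cast
    exact Nat.choose_eq_zero_of_lt (by omega)
  rw [hz, zero_mul, add_zero]
  have hfac : ((n+1).factorial : ℚ) = (n+1) * (n.factorial : ℚ) := by
    rw [Nat.factorial_succ]; push_cast; ring
  have hf0 : (n.factorial : ℚ) ≠ 0 := Nat.cast_ne_zero.mpr (Nat.factorial_ne_zero n)
  have hn0 : ((n:ℚ)+1) ≠ 0 := by positivity
  rw [hfac]
  field_simp

lemma Psi_rec' (n k : ℕ) : Psi (n+1) (k+1)
    = (1 / (Nat.factorial n : ℚ)) *
      ∑ i ∈ Finset.range (n+1), (n.choose (2*i+1) : ℚ) * (((2*i : ℕ) : ℚ) + 2)^k := by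
  unfold Psi
  rw [Finset.sum_range_succ' (fun i => ((n+1).choose (2*i) : ℚ) * ((2*i:ℕ):ℚ)^(k+1)) (n+1)]
  have h0 : ((n+1).choose (2*0) : ℚ) * ((2*0 : ℕ) : ℚ)^(k+1) = 0 := by
    norm_num
  rw [h0, add_zero]
  have key : ∀ i : ℕ, ((n+1).choose (2*(i+1)) : ℚ) * ((2*(i+1) : ℕ) : ℚ)^(k+1)
      = (n+1 : ℚ) * ((n.choose (2*i+1) : ℚ) * (((2*i:ℕ):ℚ) + 2)^k) := by
    intro i
    have hnat : (n+1) * n.choose (2*i+1) = (n+1).choose (2*i+2) * (2*i+2) :=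
      Nat.add_one_mul_choose_eq n (2*i+1)
    have hq : ((n+1 : ℕ) : ℚ) * (n.choose (2*i+1) : ℚ)
        = ((n+1).choose (2*i+2) : ℚ) * ((2*i+2 : ℕ) : ℚ) := by
      exact_mod_cast congrArg (Nat.cast (R := ℚ)) hnat
    have h2 : 2*(i+1) = 2*i+2 := by ring
    rw [h2]
    push_cast at hq ⊢
    linear_combination (-((2:ℚ)*i+2)^k) * hq
  rw [Finset.sum_congr rfl (fun i _ => key i), ← Finset.mul_sum]
  have hfac : ((n+1).factorial : ℚ) = (n+1) * (n.factorial : ℚ) := by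
    rw [Nat.factorial_succ]; push_cast; ring
  have hf0 : (n.factorial : ℚ) ≠ 0 := Nat.cast_ne_zero.mpr (Nat.factorial_ne_zero n)
  have hn0 : ((n:ℚ)+1) ≠ 0 := by positivity
  rw [hfac]
  field_simp

lemma Psi_rec (n k : ℕ) : Psi (n+1) (k+1)
    = ∑ t ∈ Finset.range (k+1), (k.choose t : ℚ) * 2^(k-t) * Phi n t := by
  rw [Psi_rec']
  have hexp : ∀ i : ℕ, (n.choose (2*i+1) : ℚ) * (((2*i : ℕ) : ℚ) + 2)^k
      = ∑ t ∈ Finset.range (k+1),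
          (n.choose (2*i+1) : ℚ) * (((2*i : ℕ) : ℚ)^t * 2^(k-t) * (k.choose t : ℚ)) := by
    intro i
    rw [add_pow, Finset.mul_sum]
  rw [Finset.sum_congr rfl (fun i _ => hexp i), Finset.mul_sum]
  rw [Finset.sum_congr rfl (fun i (_ : i ∈ Finset.range (n+1)) => Finset.mul_sum
    (Finset.range (k+1)) (fun t => (n.choose (2*i+1) : ℚ) * (((2*i : ℕ) : ℚ)^t * 2^(k-t) * (k.choose t : ℚ))) (1 / (n.factorial : ℚ)))]
  rw [Finset.sum_comm]
  refine Finset.sum_congr rfl (fun t _ => ?_)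
  unfold Phi
  rw [Finset.mul_sum, Finset.mul_sum]
  refine Finset.sum_congr rfl (fun i _ => ?_)
  ring

lemma Good.natCast (m : ℕ) : Good (m : ℚ) := by
  have := Good.intCast (m : ℤ)
  push_cast at this
  exact this

lemma good_Phi_Psi : ∀ k n : ℕ, Good (Phi n k) ∧ Good (Psi n k) := by
  intro k
  induction k using Nat.strong_induction_on with
  | _ k ih =>
    match k with
    | 0 =>
      intro n
      match n with
      | 0 =>
        constructor
        · rw [Phi_zero]; exact Good.zero
        · rw [Psi_zero_zero]; exact_mod_cast Good.intCast 1
      | n+1 =>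
        constructor
        · rw [Phi_base]; exact good_pow_div_factorial n
        · rw [Psi_base]; exact good_pow_div_factorial n
    | k+1 =>
      intro n
      match n with
      | 0 =>
        constructor
        · rw [Phi_zero]; exact Good.zero
        · rw [Psi_zero_succ]; exact Good.zero
      | n+1 =>
        constructor
        · rw [Phi_rec]
          exact ((ih k (Nat.lt_succ_self k) n).2).sub ((ih k (Nat.lt_succ_self k) (n+1)).1)
        · rw [Psi_rec]
          refine Good.sum (fun t ht => ?_)
          have h1 : Good ((k.choose t : ℚ)) := Good.natCast _
          have h2 : Good ((2:ℚ)^(k-t)) := by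
            have := Good.natCast (2^(k-t))
            push_cast at this
            exact this
          have h3 : Good (Phi n t) :=
            (ih t (by exact Nat.lt_succ_of_le (Nat.lt_succ_iff.mp (Finset.mem_range.mp ht))) n).1
          exact (h1.mul h2).mul h3

theorem Phi_val_nonneg (n k : ℕ) :
    Phi n k = 0 ∨ 0 ≤ padicValRat 2 (Phi n k) := by
  by_cases h : Phi n k = 0
  · exact Or.inl h
  · right
    obtain ⟨a, b, hb, heq⟩ := (good_Phi_Psi k n).1
    have hbq : ((b:ℚ)) ≠ 0 := Int.cast_ne_zero.mpr hb.int_ne_zero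
    have ha : a ≠ 0 := by
      rintro rfl
      apply h
      rw [heq]; simp
    have haq : ((a:ℚ)) ≠ 0 := Int.cast_ne_zero.mpr ha
    rw [heq, padicValRat.div (p := 2) haq hbq]
    rw [padicValRat.of_int, padicValRat.of_int]
    have hb0 : padicValInt 2 b = 0 := by
      apply padicValInt.eq_zero_of_not_dvd
      intro hdvd
      exact (Int.not_even_iff_odd.mpr hb) (even_iff_two_dvd.mpr hdvd)
    rw [hb0]
    simp
end

section
/- For nonnegative integers $n > k$, the 2-adic valuation of $\Phi_n(k) = \frac{1}{n!}\sum_i\binom{n}{2i+1}(2i)^k$ is at least $\alpha(n) - 1 - \alpha(k)$, with equality if and only if $\binom{n-1-k}{k}$ is odd. -/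
/-- `α n` is the number of 1's in the binary expansion of `n`. -/
def binAlpha (n : ℕ) : ℕ := (Nat.digits 2 n).sum

open Finset


def Sur : ℕ → ℕ → ℕ
  | k, 0 => if k = 0 then 1 else 0
  | k, j + 1 => ∑ m ∈ Finset.range k, Nat.choose k (m + 1) * Sur (k - m - 1) j

lemma sur_zero_of_lt : ∀ j k, k < j → Sur k j = 0 := by
  intro j
  induction j with
  | zero => intro k hk; omega
  | succ j ih =>
    intro k hk
    rw [Sur]
    apply Finset.sum_eq_zero
    intro m hm
    simp only [mem_range] at hm
    rw [ih (k - m - 1) (by omega)]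
    ring

lemma sur_self : ∀ k, Sur k k = Nat.factorial k := by
  intro k
  induction k with
  | zero => rfl
  | succ k ih =>
    rw [Sur]
    rw [Finset.sum_eq_single 0]
    · simp [ih, Nat.factorial_succ]
    · intro m hm hm0
      rw [show k + 1 - m - 1 = k - m by omega,
        sur_zero_of_lt k (k - m) (by simp only [mem_range] at hm; omega)]
      ring
    · intro h; simp at h

lemma sum_sur_ext (i : ℕ) (H : ∀ k', i ^ k' = ∑ j ∈ range (k' + 1), Sur k' j * i.choose j)
    (t M : ℕ) (h : t + 1 ≤ M) : i ^ t = ∑ j ∈ range M, Sur t j * i.choose j := by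
  rw [H t]
  apply Finset.sum_subset (Finset.range_subset_range.2 h)
  intro j _ hj
  simp only [mem_range] at hj
  rw [sur_zero_of_lt j t (by omega)]
  ring

lemma pow_eq_sum_sur (i : ℕ) : ∀ k, i ^ k = ∑ j ∈ Finset.range (k + 1), Sur k j * i.choose j := by
  induction i with
  | zero =>
    intro k
    cases k with
    | zero => rfl
    | succ k =>
      rw [Finset.sum_eq_zero, pow_succ, mul_zero]
      intro j hj
      match j with
      | 0 => rw [Sur]; simp
      | j + 1 => simp
  | succ i ih =>
    intro k
    have h1 : (i + 1) ^ k = ∑ m ∈ range (k + 1), i ^ (k - m) * Nat.choose k m := by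
      rw [add_comm i 1, add_pow]
      apply Finset.sum_congr rfl
      intro m hm; rw [one_pow, Nat.cast_id]; ring
    rw [h1, Finset.sum_range_succ' (fun m => i ^ (k - m) * Nat.choose k m)]
    simp only [Nat.sub_zero, Nat.choose_zero_right, mul_one]
    have h2 : ∀ m ∈ range k, i ^ (k - (m + 1)) * Nat.choose k (m + 1)
        = ∑ j ∈ range (k + 1), Nat.choose k (m + 1) * (Sur (k - m - 1) j * i.choose j) := by
      intro m hm
      simp only [mem_range] at hm
      rw [sum_sur_ext i ih (k - (m + 1)) (k + 1) (by omega), Finset.sum_mul]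
      apply Finset.sum_congr rfl
      intro j _
      have : k - (m + 1) = k - m - 1 := by omega
      rw [this]; ring
    rw [Finset.sum_congr rfl h2, Finset.sum_comm, ih k]
    -- now LHS : ∑ j in range (k+1), (∑ m in range k, choose k (m+1) * (Sur (k-m-1) j * choose i j))
    --           + ∑ j in range (k+1), Sur k j * choose i j
    have h3 : ∀ j ∈ range (k + 1),
        (∑ m ∈ range k, Nat.choose k (m + 1) * (Sur (k - m - 1) j * i.choose j))
        = Sur k (j + 1) * i.choose j := by
      intro j _
      rw [Sur, Finset.sum_mul]
      apply Finset.sum_congr rfl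
      intro m _; ring
    rw [Finset.sum_congr rfl h3]
    -- goal: ∑ j in range (k+1), Sur k (j+1) * choose i j + ∑ j in range (k+1), Sur k j * choose i j
    --     = ∑ j in range (k+1), Sur k j * choose (i+1) j
    rw [Finset.sum_range_succ' (fun j => Sur k j * Nat.choose (i + 1) j)]
    simp only [Nat.choose_zero_right, mul_one, Nat.choose_succ_succ]
    rw [Finset.sum_range_succ (fun j => Sur k (j + 1) * i.choose j),
      sur_zero_of_lt (k + 1) k (by omega), zero_mul, add_zero]
    have h4 : ∀ j ∈ range k, Sur k (j + 1) * (i.choose j + i.choose (j + 1))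
        = Sur k (j + 1) * i.choose j + Sur k (j + 1) * i.choose (j + 1) := by
      intro j _; ring
    rw [Finset.sum_congr rfl h4, Finset.sum_add_distrib]
    have h5 : ∑ j ∈ range (k + 1), Sur k j * i.choose j
        = ∑ j ∈ range k, Sur k (j + 1) * i.choose (j + 1) + Sur k 0 * i.choose 0 := by
      rw [Finset.sum_range_succ' (fun j => Sur k j * i.choose j)]
    rw [h5]
    simp [Nat.choose_zero_right]
    ring

lemma binAlpha_le (n : ℕ) : binAlpha n ≤ n := Nat.digit_sum_le 2 n

lemma binAlpha_pos : ∀ n, 0 < n → 0 < binAlpha n := by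
  intro n
  induction n using Nat.strong_induction_on with
  | _ n ih =>
    intro hn
    unfold binAlpha
    rw [Nat.digits_def' (by norm_num : (1:ℕ) < 2) hn]
    simp only [List.sum_cons]
    rcases Nat.even_or_odd n with he | ho
    · have h2 : 0 < n / 2 := by
        rcases he with ⟨t, ht⟩; omega
      have := ih (n / 2) (by omega) h2
      unfold binAlpha at this
      omega
    · have : n % 2 = 1 := Nat.odd_iff.mp ho
      omega

lemma val_factorial (k : ℕ) : padicValNat 2 (Nat.factorial k) = k - binAlpha k := by
  have := sub_one_mul_padicValNat_factorial (p := 2) k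
  simpa [binAlpha] using this

lemma val_choose {m k : ℕ} (h : m ≤ k) :
    (padicValNat 2 (Nat.choose k m) : ℤ) = binAlpha m + binAlpha (k - m) - binAlpha k := by
  have hmul : Nat.choose k m * (Nat.factorial m * Nat.factorial (k - m)) = Nat.factorial k := by
    rw [← mul_assoc]; exact Nat.choose_mul_factorial_mul_factorial h
  have hne : Nat.choose k m ≠ 0 := (Nat.choose_pos h).ne'
  have h1 : padicValNat 2 (Nat.choose k m * (Nat.factorial m * Nat.factorial (k - m)))
      = padicValNat 2 (Nat.choose k m) + (padicValNat 2 (Nat.factorial m)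
        + padicValNat 2 (Nat.factorial (k - m))) := by
    rw [padicValNat.mul hne (by positivity), padicValNat.mul (Nat.factorial_ne_zero m)
      (Nat.factorial_ne_zero (k - m))]
  rw [hmul] at h1
  rw [val_factorial, val_factorial, val_factorial] at h1
  have a1 := binAlpha_le m
  have a2 := binAlpha_le (k - m)
  have a3 := binAlpha_le k
  omega

lemma sur_dvd : ∀ j k, 2 ^ (j - binAlpha k) ∣ Sur k j := by
  intro j
  induction j with
  | zero => intro k; simp
  | succ j ih =>
    intro k
    rw [Sur]
    apply Finset.dvd_sum
    intro m hm
    simp only [mem_range] at hm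
    have hc := val_choose (m := m + 1) (k := k) (by omega)
    rw [show k - (m + 1) = k - m - 1 by omega] at hc
    have h1 : 0 < binAlpha (m + 1) := binAlpha_pos _ (by omega)
    have hineq : (j + 1) - binAlpha k
        ≤ padicValNat 2 (Nat.choose k (m + 1)) + (j - binAlpha (k - m - 1)) := by omega
    calc 2 ^ ((j + 1) - binAlpha k)
        ∣ 2 ^ (padicValNat 2 (Nat.choose k (m + 1)) + (j - binAlpha (k - m - 1))) :=
          pow_dvd_pow 2 hineq
      _ = 2 ^ padicValNat 2 (Nat.choose k (m + 1)) * 2 ^ (j - binAlpha (k - m - 1)) := pow_add 2 _ _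
      _ ∣ Nat.choose k (m + 1) * Sur (k - m - 1) j :=
          mul_dvd_mul pow_padicValNat_dvd (ih (k - m - 1))


def Bn (n j : ℕ) : ℕ := ∑ i ∈ Finset.range (n + 1), Nat.choose n (2 * i + 1) * Nat.choose i j
def Dn (n j : ℕ) : ℕ := ∑ i ∈ Finset.range (n + 1), Nat.choose n (2 * i) * Nat.choose i j

lemma Bn_ext (n j M : ℕ) (h : n + 1 ≤ M) :
    Bn n j = ∑ i ∈ Finset.range M, Nat.choose n (2 * i + 1) * Nat.choose i j := by
  apply Finset.sum_subset (Finset.range_subset_range.2 h)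
  intro i _ hi
  simp only [mem_range] at hi
  rw [Nat.choose_eq_zero_of_lt (by omega)]
  ring

lemma Dn_ext (n j M : ℕ) (h : n + 1 ≤ M) :
    Dn n j = ∑ i ∈ Finset.range M, Nat.choose n (2 * i) * Nat.choose i j := by
  apply Finset.sum_subset (Finset.range_subset_range.2 h)
  intro i _ hi
  simp only [mem_range] at hi
  rw [Nat.choose_eq_zero_of_lt (by omega)]
  ring

lemma Bn_succ (n j : ℕ) : Bn (n + 1) j = Dn n j + Bn n j := by
  rw [Bn, Dn_ext n j (n + 2) (by omega), Bn_ext n j (n + 2) (by omega), ← Finset.sum_add_distrib]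
  apply Finset.sum_congr rfl
  intro i _
  rw [show 2 * i + 1 = (2 * i) + 1 by ring, Nat.choose_succ_succ]
  ring

lemma Dn_succ (n j : ℕ) : Dn (n + 1) j
    = Dn n j + ∑ i ∈ Finset.range (n + 1), Nat.choose n (2 * i + 1) * Nat.choose (i + 1) j := by
  rw [Dn]
  rw [Finset.sum_range_succ' (fun i => Nat.choose (n + 1) (2 * i) * Nat.choose i j)]
  have h1 : ∀ i ∈ range (n + 1), Nat.choose (n + 1) (2 * (i + 1)) * Nat.choose (i + 1) j
      = Nat.choose n (2 * i + 1) * Nat.choose (i + 1) j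
        + Nat.choose n (2 * (i + 1)) * Nat.choose (i + 1) j := by
    intro i _
    rw [show 2 * (i + 1) = (2 * i + 1) + 1 by ring, Nat.choose_succ_succ]
    ring
  rw [Finset.sum_congr rfl h1, Finset.sum_add_distrib]
  have h2 : Dn n j = ∑ i ∈ range (n + 1), Nat.choose n (2 * (i + 1)) * Nat.choose (i + 1) j
      + Nat.choose (n + 1) (2 * 0) * Nat.choose 0 j := by
    rw [Dn_ext n j (n + 2) (by omega),
      Finset.sum_range_succ' (fun i => Nat.choose n (2 * i) * Nat.choose i j)]
    simp
  rw [h2]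
  ring

lemma Dn_succ_zero (n : ℕ) : Dn (n + 1) 0 = Dn n 0 + Bn n 0 := by
  rw [Dn_succ, Bn]
  simp

lemma Dn_succ_succ (n j : ℕ) : Dn (n + 1) (j + 1) = Dn n (j + 1) + (Bn n j + Bn n (j + 1)) := by
  rw [Dn_succ, Bn, Bn, ← Finset.sum_add_distrib]
  congr 1
  apply Finset.sum_congr rfl
  intro i _
  rw [Nat.choose_succ_succ]
  ring

lemma Bn_zero {n j : ℕ} (h : n ≤ 2 * j) : Bn n j = 0 := by
  apply Finset.sum_eq_zero
  intro i _
  rcases lt_or_ge i j with hij | hij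
  · rw [Nat.choose_eq_zero_of_lt hij]; ring
  · rw [Nat.choose_eq_zero_of_lt (show n < 2 * i + 1 by omega)]; ring

lemma Dn_diag (j : ℕ) : Dn (2 * j) j = 1 := by
  rw [Dn, Finset.sum_eq_single j]
  · simp
  · intro i _ hij
    rcases lt_or_ge i j with h | h
    · rw [Nat.choose_eq_zero_of_lt h]; ring
    · rw [Nat.choose_eq_zero_of_lt (show 2 * j < 2 * i by omega)]; ring
  · intro h
    simp only [mem_range] at h
    omega


lemma chooseCast {x y : ℕ} (c : ℕ) (h : x = y) : Nat.choose x c = Nat.choose y c := by rw [h]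

theorem BD_formula : ∀ n j r, n = 2 * j + 1 + r →
    Bn n j = 2 ^ r * Nat.choose (j + r) r ∧
    Dn n j = 2 ^ r * (Nat.choose (j + r) r + 2 * Nat.choose (j + r) (r + 1)) := by
  intro n
  induction n with
  | zero => intro j r h; omega
  | succ n ih =>
    intro j r h
    rcases r with _ | r'
    · -- r = 0, n = 2*j
      have hn : n = 2 * j := by omega
      subst hn
      have c1 : Nat.choose (j + 0) 0 = 1 := Nat.choose_zero_right _
      constructor
      · rw [Bn_succ, Bn_zero (le_refl _), Dn_diag, c1]
        norm_num
      · rcases j with _ | j'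
        · rw [Dn_succ_zero]
          show Dn 0 0 + Bn 0 0 = _
          rw [Bn_zero (by omega)]
          decide
        · have h2 : 2 * (j' + 1) = 2 * j' + 1 + 1 := by ring
          have hB : Bn (2 * (j' + 1)) j' = 2 ^ 1 * Nat.choose (j' + 1) 1 := by
            obtain ⟨hb, _⟩ := ih j' 1 h2
            rw [hb]
          rw [Dn_succ_succ, Dn_diag, hB, Bn_zero (le_refl _)]
          simp [Nat.choose_one_right]
    · -- r = r' + 1, n = 2j + 1 + r'
      have hn : n = 2 * j + 1 + r' := by omega
      obtain ⟨ihB, ihD⟩ := ih j r' hn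
      have p1 : Nat.choose (j + r' + 1) (r' + 1)
          = Nat.choose (j + r') r' + Nat.choose (j + r') (r' + 1) := Nat.choose_succ_succ _ _
      have p2 : Nat.choose (j + r' + 1) (r' + 2)
          = Nat.choose (j + r') (r' + 1) + Nat.choose (j + r') (r' + 2) := by
        rw [show r' + 2 = (r' + 1) + 1 by omega]
        exact Nat.choose_succ_succ _ _
      constructor
      · rw [Bn_succ, ihB, ihD, chooseCast (r' + 1) (show j + (r' + 1) = j + r' + 1 by omega), p1]
        ring
      · rcases j with _ | j''
        · -- j = 0
          have c1 : Nat.choose r' (r' + 1) = 0 := Nat.choose_eq_zero_of_lt (by omega)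
          have c2 : Nat.choose (r' + 1) (r' + 1 + 1) = 0 := Nat.choose_eq_zero_of_lt (by omega)
          rw [Dn_succ_zero, ihB, ihD]
          simp only [Nat.zero_add, Nat.choose_self, c1, c2]
          ring
        · -- j = j'' + 1
          have hB2 : Bn n j'' = 2 ^ (r' + 2) * Nat.choose (j'' + 1 + r' + 1) (r' + 2) := by
            obtain ⟨hb, _⟩ := ih j'' (r' + 2) (by omega)
            rw [hb, chooseCast (r' + 2) (show j'' + (r' + 2) = j'' + 1 + r' + 1 by omega)]
          rw [Dn_succ_succ, ihD, ihB, hB2,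
            chooseCast (r' + 1 + 1) (show j'' + 1 + (r' + 1) = j'' + 1 + r' + 1 by omega),
            chooseCast (r' + 1) (show j'' + 1 + (r' + 1) = j'' + 1 + r' + 1 by omega),
            show r' + 1 + 1 = r' + 2 by omega, p1, p2]
          ring

lemma key_B (n j : ℕ) (hn : 1 ≤ n) :
    4 ^ j * Bn n j = 2 ^ (n - 1) * Nat.choose (n - 1 - j) j := by
  rcases le_or_gt n (2 * j) with hc | hc
  · rw [Bn_zero hc, Nat.choose_eq_zero_of_lt (by omega)]
    ring
  · obtain ⟨hb, _⟩ := BD_formula n j (n - (2 * j + 1)) (by omega)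
    set r := n - (2 * j + 1) with hr
    have hsym : Nat.choose (j + r) j = Nat.choose (j + r) r := by
      have hs := Nat.choose_symm (show r ≤ j + r by omega)
      rw [show j + r - r = j by omega] at hs
      exact hs
    rw [hb, chooseCast j (show n - 1 - j = j + r by omega), hsym,
      show n - 1 = 2 * j + r by omega, show (4:ℕ) = 2 ^ 2 by norm_num, ← pow_mul, pow_add]
    ring

theorem Phi_val_refined (n k : ℕ) (h : k < n) :
    (Phi n k = 0 ∨
        padicValRat 2 (Phi n k) ≥ (binAlpha n : ℤ) - 1 - binAlpha k) ∧
      ((Phi n k ≠ 0 ∧ padicValRat 2 (Phi n k) = (binAlpha n : ℤ) - 1 - binAlpha k) ↔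
        Odd (Nat.choose (n - 1 - k) k)) := by
  haveI : Fact (Nat.Prime 2) := ⟨Nat.prime_two⟩
  have hn1 : 1 ≤ n := by omega
  set S : ℕ := ∑ i ∈ Finset.range (n + 1), Nat.choose n (2 * i + 1) * (2 * i) ^ k with hSdef
  set T : ℕ := ∑ i ∈ Finset.range (n + 1), Nat.choose n (2 * i + 1) * i ^ k with hTdef
  have hST : S = 2 ^ k * T := by
    rw [hSdef, hTdef, Finset.mul_sum]
    refine Finset.sum_congr rfl fun i _ => ?_
    rw [mul_pow]
    ring
  have hT : T = ∑ j ∈ range (k + 1), Sur k j * Bn n j := by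
    rw [hTdef]
    have h1 : ∀ i ∈ range (n + 1), Nat.choose n (2 * i + 1) * i ^ k
        = ∑ j ∈ range (k + 1), Sur k j * (Nat.choose n (2 * i + 1) * Nat.choose i j) := by
      intro i _
      rw [pow_eq_sum_sur i k, Finset.mul_sum]
      exact Finset.sum_congr rfl fun j _ => by ring
    rw [Finset.sum_congr rfl h1, Finset.sum_comm]
    refine Finset.sum_congr rfl fun j _ => ?_
    rw [Bn, Finset.mul_sum]
  set Sg : ℕ := ∑ j ∈ range (k + 1), Sur k j * (4 ^ (k - j) * Nat.choose (n - 1 - j) j)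
    with hSgdef
  have hMaster : 4 ^ k * T = 2 ^ (n - 1) * Sg := by
    rw [hT, hSgdef, Finset.mul_sum, Finset.mul_sum]
    refine Finset.sum_congr rfl fun j hj => ?_
    simp only [mem_range] at hj
    have hjk : j ≤ k := by omega
    have h4 : (4 : ℕ) ^ k = 4 ^ (k - j) * 4 ^ j := by
      rw [← pow_add, Nat.sub_add_cancel hjk]
    calc 4 ^ k * (Sur k j * Bn n j) = Sur k j * (4 ^ (k - j) * (4 ^ j * Bn n j)) := by
          rw [h4]; ring
      _ = Sur k j * (4 ^ (k - j) * (2 ^ (n - 1) * Nat.choose (n - 1 - j) j)) := by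
          rw [key_B n j hn1]
      _ = 2 ^ (n - 1) * (Sur k j * (4 ^ (k - j) * Nat.choose (n - 1 - j) j)) := by ring
  set a := k - binAlpha k with hadef
  have hαk := binAlpha_le k
  have hαn := binAlpha_le n
  have hpeel : Sg = (∑ j ∈ range k, Sur k j * (4 ^ (k - j) * Nat.choose (n - 1 - j) j))
      + Nat.factorial k * Nat.choose (n - 1 - k) k := by
    rw [hSgdef, Finset.sum_range_succ, sur_self]
    simp [Nat.sub_self]
  set R := ∑ j ∈ range k, Sur k j * (4 ^ (k - j) * Nat.choose (n - 1 - j) j) with hRdef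
  have hdvdR : 2 ^ (a + 1) ∣ R := by
    apply Finset.dvd_sum
    intro j hj
    simp only [mem_range] at hj
    have h1 : 2 ^ (j - binAlpha k) ∣ Sur k j := sur_dvd j k
    have h2 : (4 : ℕ) ^ (k - j) = 2 ^ (2 * (k - j)) := by
      rw [pow_mul]; norm_num
    have hle : a + 1 ≤ (j - binAlpha k) + 2 * (k - j) := by omega
    calc 2 ^ (a + 1) ∣ 2 ^ ((j - binAlpha k) + 2 * (k - j)) := pow_dvd_pow 2 hle
      _ = 2 ^ (j - binAlpha k) * 2 ^ (2 * (k - j)) := pow_add 2 _ _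
      _ ∣ Sur k j * (4 ^ (k - j) * Nat.choose (n - 1 - j) j) := by
          rw [h2, ← mul_assoc]
          exact Dvd.dvd.mul_right (mul_dvd_mul h1 dvd_rfl) _
  have hvfac : padicValNat 2 (Nat.factorial k) = a := val_factorial k
  obtain ⟨u, hu⟩ : ∃ u, Nat.factorial k = 2 ^ a * u := by
    have := pow_padicValNat_dvd (p := 2) (n := Nat.factorial k)
    rw [hvfac] at this
    exact this
  have huodd : u % 2 = 1 := by
    rcases Nat.even_or_odd u with hue | huo
    · exfalso
      obtain ⟨u', hu'⟩ := hue
      have hd : 2 ^ (a + 1) ∣ Nat.factorial k := ⟨u', by rw [hu, hu']; ring⟩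
      have hnd := pow_succ_padicValNat_not_dvd (p := 2) (Nat.factorial_ne_zero k)
      rw [hvfac] at hnd
      exact hnd hd
    · exact Nat.odd_iff.mp huo
  obtain ⟨t, ht⟩ := hdvdR
  set C0 := Nat.choose (n - 1 - k) k with hC0
  set W := 2 * t + u * C0 with hWdef
  have hSgW : Sg = 2 ^ a * W := by
    rw [hpeel, ht, hu, hWdef]
    ring
  have hfacne : (Nat.factorial n : ℚ) ≠ 0 := Nat.cast_ne_zero.2 (Nat.factorial_ne_zero n)
  have hPhi : Phi n k = (S : ℚ) / (Nat.factorial n : ℚ) := by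
    have hcast : (S : ℚ)
        = ∑ i ∈ Finset.range (n + 1), (Nat.choose n (2 * i + 1) : ℚ) * ((2 * i : ℕ) : ℚ) ^ k := by
      rw [hSdef]
      push_cast
      ring
    unfold Phi
    rw [← hcast]
    ring
  have hS2 : 2 ^ (2 * k) * S = 2 ^ (n - 1 + k) * Sg := by
    rw [hST]
    have h4 : (2 : ℕ) ^ (2 * k) = 4 ^ k := by rw [pow_mul]; norm_num
    calc 2 ^ (2 * k) * (2 ^ k * T) = 2 ^ k * (4 ^ k * T) := by rw [h4]; ring
      _ = 2 ^ k * (2 ^ (n - 1) * Sg) := by rw [hMaster]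
      _ = 2 ^ (n - 1 + k) * Sg := by rw [pow_add]; ring
  have hpow_ne : ∀ m : ℕ, (2 : ℕ) ^ m ≠ 0 := fun m => pow_ne_zero m two_ne_zero
  have hS0iff : S = 0 ↔ Sg = 0 := by
    constructor
    · intro h0
      rw [h0, mul_zero] at hS2
      exact (Nat.mul_eq_zero.mp hS2.symm).resolve_left (hpow_ne _)
    · intro h0
      rw [h0, mul_zero] at hS2
      exact (Nat.mul_eq_zero.mp hS2).resolve_left (hpow_ne _)
  have hvn : padicValNat 2 (Nat.factorial n) = n - binAlpha n := val_factorial n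
  by_cases hSg0 : Sg = 0
  · have hS0 : S = 0 := hS0iff.2 hSg0
    have hPhi0 : Phi n k = 0 := by rw [hPhi, hS0]; simp
    have hC0even : C0 % 2 = 0 := by
      have hW0 : W = 0 := by
        rw [hSg0] at hSgW
        exact (Nat.mul_eq_zero.mp hSgW.symm).resolve_left (hpow_ne _)
      have huC : u * C0 = 0 := by omega
      rcases Nat.mul_eq_zero.mp huC with h1 | h1 <;> omega
    refine ⟨Or.inl hPhi0, ?_, ?_⟩
    · rintro ⟨hne, -⟩
      exact absurd hPhi0 hne
    · intro hodd
      rw [Nat.odd_iff] at hodd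
      exfalso
      omega
  · have hS0 : S ≠ 0 := fun h0 => hSg0 (hS0iff.1 h0)
    have hPhine : Phi n k ≠ 0 := by
      rw [hPhi]
      exact div_ne_zero (Nat.cast_ne_zero.2 hS0) hfacne
    have hval2 : padicValRat 2 (Phi n k)
        = (padicValNat 2 S : ℤ) - padicValNat 2 (Nat.factorial n) := by
      rw [hPhi, padicValRat.div (Nat.cast_ne_zero.2 hS0) hfacne,
        padicValRat.of_nat, padicValRat.of_nat]
    have e3 : 2 * k + padicValNat 2 S = (n - 1 + k) + padicValNat 2 Sg := by
      have e1 : padicValNat 2 (2 ^ (2 * k) * S) = 2 * k + padicValNat 2 S := by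
        rw [padicValNat.mul (hpow_ne _) hS0, padicValNat.prime_pow]
      have e2 : padicValNat 2 (2 ^ (n - 1 + k) * Sg) = (n - 1 + k) + padicValNat 2 Sg := by
        rw [padicValNat.mul (hpow_ne _) hSg0, padicValNat.prime_pow]
      rw [← e1, ← e2, hS2]
    rcases Nat.even_or_odd C0 with hev | hodd
    · have hWeven : 2 ∣ W := by
        obtain ⟨c, hc⟩ := hev
        exact ⟨t + u * c, by rw [hWdef, hc]; ring⟩
      obtain ⟨w, hw⟩ := hWeven
      have hdvd1 : 2 ^ (a + 1) ∣ Sg := ⟨w, by rw [hSgW, hw, pow_succ]; ring⟩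
      have hge : a + 1 ≤ padicValNat 2 Sg := (padicValNat_dvd_iff_le hSg0).mp hdvd1
      constructor
      · right
        rw [hval2]
        omega
      · constructor
        · rintro ⟨-, heq⟩
          rw [hval2] at heq
          omega
        · intro hoddC
          rw [Nat.odd_iff] at hoddC
          rcases hev with ⟨c, hc⟩
          exfalso
          omega
    · have hC0odd : C0 % 2 = 1 := Nat.odd_iff.mp hodd
      have hWodd : W % 2 = 1 := by
        have : (u * C0) % 2 = 1 := by
          rw [Nat.mul_mod, huodd, hC0odd]
        omega
      have hWne : W ≠ 0 := by omega
      have hvW : padicValNat 2 W = 0 := padicValNat.eq_zero_of_not_dvd (by omega)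
      have hvSg : padicValNat 2 Sg = a := by
        rw [hSgW, padicValNat.mul (hpow_ne _) hWne, padicValNat.prime_pow, hvW, add_zero]
      constructor
      · right
        rw [hval2]
        omega
      · constructor
        · intro _
          exact hodd
        · intro _
          refine ⟨hPhine, ?_⟩
          rw [hval2]
          omega
end

section
/- For positive integers $n$ and nonnegative integers $k$, the integral identity $\frac{1}{n!}\sum_i \binom{2n}{2i+1} i^k = \sum_{d \ge 0} \frac{2^{d+1}\binom{n+d}{d}}{(2d+1)!!} S(k, n-1-d)$ holds, where $(2d+1)!! = \prod_{i=0}^{d}(2i+1)$ and $S$ is the Stirling number of the second kind. -/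
/-- Stirling number of the second kind, via the alternating sum formula. -/
def Stir (k m : ℕ) : ℚ :=
  (1 / (Nat.factorial m : ℚ)) *
    ∑ j ∈ Finset.range (m + 1), (-1 : ℚ) ^ (m - j) * (Nat.choose m j : ℚ) * (j : ℚ) ^ k

/-- The odd double factorial `(2d+1)!! = 1·3·⋯·(2d+1)`. -/
def oddDoubleFactorial (d : ℕ) : ℕ := ∏ i ∈ Finset.range (d + 1), (2 * i + 1)

open Finset Polynomial

namespace PA

lemma parity_split {M : Type*} [AddCommMonoid M] (f : ℕ → M) (n : ℕ) :
    ∑ j ∈ range (2*n), f j = ∑ i ∈ range n, f (2*i) + ∑ i ∈ range n, f (2*i+1) := by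
  induction n with
  | zero => simp
  | succ n ih =>
    have h : 2*(n+1) = (2*n) + 1 + 1 := by ring
    rw [h, sum_range_succ, sum_range_succ, ih, sum_range_succ (fun i => f (2*i)),
      sum_range_succ (fun i => f (2*i+1))]
    abel

lemma lemA (n : ℕ) :
    (1 + X)^(2*n) - (1 - X)^(2*n) =
      ∑ i ∈ range n, Polynomial.C ((2:ℚ) * (Nat.choose (2*n) (2*i+1))) * X^(2*i+1) := by
  have h1 : ((1:ℚ[X]) + X)^(2*n) = ∑ j ∈ range (2*n+1), X^j * (Nat.choose (2*n) j : ℚ[X]) := by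
    rw [add_comm, add_pow]; exact sum_congr rfl (fun j hj => by ring)
  have h2 : ((1:ℚ[X]) - X)^(2*n) = ∑ j ∈ range (2*n+1), (-X)^j * (Nat.choose (2*n) j : ℚ[X]) := by
    rw [sub_eq_add_neg, add_comm, add_pow]; exact sum_congr rfl (fun j hj => by ring)
  rw [h1, h2, ← sum_sub_distrib]
  have h3 : ∀ j, X^j * (Nat.choose (2*n) j : ℚ[X]) - (-X)^j * (Nat.choose (2*n) j : ℚ[X])
      = (X^j - (-X)^j) * (Nat.choose (2*n) j : ℚ[X]) := fun j => by ring
  simp_rw [h3]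
  rw [sum_range_succ, parity_split]
  have heven : ∀ i : ℕ, ((X:ℚ[X])^(2*i) - (-X)^(2*i)) * ((Nat.choose (2*n) (2*i) : ℚ[X])) = 0 := by
    intro i
    rw [neg_pow, Even.neg_one_pow ⟨i, by ring⟩]
    ring
  rw [heven n, sum_congr rfl (fun i _ => heven i), Finset.sum_const_zero]
  rw [zero_add, add_zero]
  refine sum_congr rfl (fun i hi => ?_)
  rw [neg_pow, Odd.neg_one_pow ⟨i, by ring⟩]
  simp only [Polynomial.C_mul, map_natCast, map_ofNat]
  ring

lemma subpow (m : ℕ) :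
    ((X:ℚ[X])^2 - 1)^m * X =
      ∑ j ∈ range (m+1), Polynomial.C ((-1:ℚ)^(m-j) * (Nat.choose m j)) * X^(2*j+1) := by
  have h : ((X:ℚ[X])^2 - 1)^m = ∑ j ∈ range (m+1), (X^2)^j * (-1)^(m-j) * (Nat.choose m j : ℚ[X]) := by
    rw [sub_eq_add_neg, add_pow]
  rw [h, sum_mul]
  refine sum_congr rfl (fun j hj => ?_)
  simp only [Polynomial.C_mul, map_natCast, map_pow, map_neg, map_one, ← pow_mul]
  ring


def c (n m : ℕ) : ℚ := 2 ^ (2*n - 2*m) * (Nat.choose (2*n - 1 - m) m)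

noncomputable def Sb (n : ℕ) : ℚ[X] :=
  ∑ m ∈ range n, Polynomial.C (c n m) * (X^2 - 1)^m * X

def g (n : ℕ) : ℕ → ℚ
  | 0 => 0
  | (m+1) => 2 * c (n+1) m

def h (n : ℕ) : ℕ → ℚ
  | 0 => 0
  | 1 => 0
  | (m+2) => c n m

lemma choose_id (a q : ℕ) :
    Nat.choose (a+2) (q+2) + Nat.choose a q
      = Nat.choose a (q+2) + 2 * Nat.choose (a+1) (q+1) := by
  simp [Nat.choose_succ_succ]
  ring

lemma c_rec (n m : ℕ) (hm : m < n+2) : c (n+2) m = 4 * c (n+1) m + g n m - h n m := by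
  match m with
  | 0 =>
    simp only [c, g, h]
    rw [show 2*(n+2)-2*0 = 2*n+2+2 from by omega, show 2*(n+1)-2*0 = 2*n+2 from by omega,
      show 2*(n+2)-1-0 = 2*n+3 from by omega, show 2*(n+1)-1-0 = 2*n+1 from by omega]
    simp [pow_add]
    ring
  | 1 =>
    simp only [c, g, h]
    rw [show 2*(n+2)-2*1 = 2*n+2 from by omega, show 2*(n+1)-2*1 = 2*n from by omega,
      show 2*(n+2)-1-1 = 2*n+2 from by omega, show 2*(n+1)-1-1 = 2*n from by omega,
      show 2*(n+1)-2*0 = 2*n+2 from by omega, show 2*(n+1)-1-0 = 2*n+1 from by omega]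
    simp [pow_add, Nat.choose_one_right]
    ring
  | (q+2) =>
    have hq : q < n := by omega
    obtain ⟨b, rfl⟩ : ∃ b, n = q + 1 + b := ⟨n - (q+1), by omega⟩
    simp only [c, g, h]
    rw [show 2*(q+1+b+2)-2*(q+2) = 2*b+2 from by omega,
      show 2*(q+1+b+1)-2*(q+2) = 2*b from by omega,
      show 2*(q+1+b+1)-2*(q+1) = 2*b+2 from by omega,
      show 2*(q+1+b)-2*q = 2*b+2 from by omega,
      show 2*(q+1+b+2)-1-(q+2) = (q+2*b+1)+2 from by omega,
      show 2*(q+1+b+1)-1-(q+2) = q+2*b+1 from by omega,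
      show 2*(q+1+b+1)-1-(q+1) = (q+2*b+1)+1 from by omega,
      show 2*(q+1+b)-1-q = q+2*b+1 from by omega]
    have hc := choose_id (q+2*b+1) q
    have hcq : ((Nat.choose (q+2*b+1+2) (q+2) : ℚ)) + (Nat.choose (q+2*b+1) q : ℚ)
        = (Nat.choose (q+2*b+1) (q+2) : ℚ) + 2 * (Nat.choose (q+2*b+1+1) (q+1) : ℚ) := by
      exact_mod_cast congrArg (Nat.cast : ℕ → ℚ) hc
    push_cast at hcq ⊢
    linear_combination (2:ℚ)^(2*b+2) * hcq


lemma sum_4c (n : ℕ) :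
    ∑ m ∈ range (n+2), Polynomial.C (4 * c (n+1) m) * ((X:ℚ[X])^2-1)^m * X
      = 4 * Sb (n+1) := by
  rw [sum_range_succ]
  have hz : c (n+1) (n+1) = 0 := by
    have : 2*(n+1)-1-(n+1) = n := by omega
    simp [c, this, Nat.choose_eq_zero_of_lt (Nat.lt_succ_self n)]
  rw [hz]
  simp only [mul_zero, map_zero, zero_mul, add_zero]
  rw [Sb, mul_sum]
  refine sum_congr rfl fun m hm => ?_
  simp only [Polynomial.C_mul, map_ofNat]
  ring

lemma sum_g (n : ℕ) :
    ∑ m ∈ range (n+2), Polynomial.C (g n m) * ((X:ℚ[X])^2-1)^m * X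
      = (2*(((X:ℚ[X])^2-1))) * Sb (n+1) := by
  rw [sum_range_succ' _ (n+1)]
  have : Polynomial.C (g n 0) * ((X:ℚ[X])^2-1)^0 * X = 0 := by simp [g]
  rw [this, add_zero, Sb, mul_sum]
  refine sum_congr rfl fun m hm => ?_
  show Polynomial.C (2 * c (n+1) m) * ((X:ℚ[X])^2-1)^(m+1) * X = _
  simp only [Polynomial.C_mul, map_ofNat]
  ring

lemma sum_h (n : ℕ) :
    ∑ m ∈ range (n+2), Polynomial.C (h n m) * ((X:ℚ[X])^2-1)^m * X
      = (((X:ℚ[X])^2-1))^2 * Sb n := by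
  rw [sum_range_succ' _ (n+1)]
  have h0 : Polynomial.C (h n 0) * ((X:ℚ[X])^2-1)^0 * X = 0 := by simp [h]
  rw [h0, add_zero, sum_range_succ' _ n]
  have h1 : Polynomial.C (h n (0+1)) * ((X:ℚ[X])^2-1)^(0+1) * X = 0 := by simp [h]
  rw [h1, add_zero, Sb, mul_sum]
  refine sum_congr rfl fun m hm => ?_
  show Polynomial.C (c n m) * ((X:ℚ[X])^2-1)^(m+1+1) * X = _
  ring

lemma Sb_rec (n : ℕ) : Sb (n+2) = 2*(1+X^2) * Sb (n+1) - (1-X^2)^2 * Sb n := by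
  have key : Sb (n+2)
      = (∑ m ∈ range (n+2), Polynomial.C (4 * c (n+1) m) * ((X:ℚ[X])^2-1)^m * X)
        + (∑ m ∈ range (n+2), Polynomial.C (g n m) * ((X:ℚ[X])^2-1)^m * X)
        - (∑ m ∈ range (n+2), Polynomial.C (h n m) * ((X:ℚ[X])^2-1)^m * X) := by
    rw [Sb, ← sum_add_distrib, ← sum_sub_distrib]
    refine sum_congr rfl fun m hm => ?_
    rw [mem_range] at hm
    rw [c_rec n m hm]
    simp only [map_sub, map_add]
    ring
  rw [key, sum_4c, sum_g, sum_h]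
  ring

lemma lemB : ∀ n : ℕ, ((1:ℚ[X])+X)^(2*n) - (1-X)^(2*n) = Sb n := by
  have base0 : ((1:ℚ[X])+X)^(2*0) - (1-X)^(2*0) = Sb 0 := by simp [Sb]
  have base1 : ((1:ℚ[X])+X)^(2*1) - (1-X)^(2*1) = Sb 1 := by
    rw [Sb]
    rw [sum_range_one]
    have : c 1 0 = 4 := by norm_num [c]
    rw [this]
    have h4 : Polynomial.C (4:ℚ) = 4 := map_ofNat Polynomial.C 4
    rw [h4]
    ring
  have step : ∀ n : ℕ, ((1:ℚ[X])+X)^(2*n) - (1-X)^(2*n) = Sb n →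
      ((1:ℚ[X])+X)^(2*(n+1)) - (1-X)^(2*(n+1)) = Sb (n+1) →
      ((1:ℚ[X])+X)^(2*(n+2)) - (1-X)^(2*(n+2)) = Sb (n+2) := by
    intro n h0 h1
    have e1 : ((1:ℚ[X])+X)^(2*(n+2)) = ((1+X)^(2*n))*(1+X)^4 := by
      rw [show 2*(n+2) = 2*n+4 from by ring, pow_add]
    have e2 : ((1:ℚ[X])-X)^(2*(n+2)) = ((1-X)^(2*n))*(1-X)^4 := by
      rw [show 2*(n+2) = 2*n+4 from by ring, pow_add]
    have e3 : ((1:ℚ[X])+X)^(2*(n+1)) = ((1+X)^(2*n))*(1+X)^2 := by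
      rw [show 2*(n+1) = 2*n+2 from by ring, pow_add]
    have e4 : ((1:ℚ[X])-X)^(2*(n+1)) = ((1-X)^(2*n))*(1-X)^2 := by
      rw [show 2*(n+1) = 2*n+2 from by ring, pow_add]
    rw [Sb_rec, ← h0, ← h1, e1, e2, e3, e4]
    ring
  suffices h : ∀ n : ℕ, (((1:ℚ[X])+X)^(2*n) - (1-X)^(2*n) = Sb n) ∧
      (((1:ℚ[X])+X)^(2*(n+1)) - (1-X)^(2*(n+1)) = Sb (n+1)) from fun n => (h n).1
  intro n
  induction n with
  | zero => exact ⟨base0, base1⟩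
  | succ n ih => exact ⟨ih.2, step n ih.1 ih.2⟩


lemma coeff_odd_sum (N : ℕ) (f : ℕ → ℚ) (j : ℕ) :
    (∑ i ∈ range N, Polynomial.C (f i) * X^(2*i+1)).coeff (2*j+1)
      = if j < N then f j else 0 := by
  rw [finset_sum_coeff]
  have h : ∀ i, (Polynomial.C (f i) * (X:ℚ[X])^(2*i+1)).coeff (2*j+1) = if i = j then f i else 0 := by
    intro i
    rw [Polynomial.coeff_C_mul, Polynomial.coeff_X_pow]
    by_cases h : i = j
    · subst h; simp
    · have h2 : ¬(2*j+1 = 2*i+1) := by omega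
      simp [h, h2, Ne.symm h]
  simp_rw [h]
  rw [Finset.sum_ite_eq' (range N) j f]
  simp [Finset.mem_range]

lemma key (n j : ℕ) (hj : j < n) :
    2 * (Nat.choose (2*n) (2*j+1) : ℚ)
      = ∑ m ∈ range n, c n m * ((-1:ℚ)^(m-j) * (Nat.choose m j)) := by
  have hAB := (lemA n).symm.trans (lemB n)
  have hS : Sb n = ∑ m ∈ range n, ∑ j' ∈ range (m+1),
      Polynomial.C (c n m * ((-1:ℚ)^(m-j') * (Nat.choose m j'))) * X^(2*j'+1) := by
    rw [Sb]
    refine sum_congr rfl fun m hm => ?_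
    rw [mul_assoc, subpow, mul_sum]
    refine sum_congr rfl fun j' _ => ?_
    simp only [Polynomial.C_mul]; ring
  have h1 := congrArg (fun p => Polynomial.coeff p (2*j+1)) (hAB.trans hS)
  rw [coeff_odd_sum n _ j, if_pos hj, finset_sum_coeff] at h1
  have h2 : ∀ m ∈ range n,
      (∑ j' ∈ range (m+1),
        Polynomial.C (c n m * ((-1:ℚ)^(m-j') * (Nat.choose m j'))) * X^(2*j'+1)).coeff (2*j+1)
      = c n m * ((-1:ℚ)^(m-j) * (Nat.choose m j)) := by
    intro m _
    rw [coeff_odd_sum (m+1) (fun j' => c n m * ((-1:ℚ)^(m-j') * (Nat.choose m j'))) j]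
    by_cases h : j < m+1
    · rw [if_pos h]
    · rw [if_neg h]
      have hz : Nat.choose m j = 0 := Nat.choose_eq_zero_of_lt (by omega)
      simp [hz]
  rw [sum_congr rfl h2] at h1
  exact h1

lemma odf_eq (d : ℕ) :
    (oddDoubleFactorial d : ℚ) * (2^d * (Nat.factorial d)) = (Nat.factorial (2*d+1) : ℚ) := by
  induction d with
  | zero => simp [oddDoubleFactorial]
  | succ d ih =>
    rw [oddDoubleFactorial, Finset.prod_range_succ, ← oddDoubleFactorial]
    rw [show 2*(d+1)+1 = (2*d+1)+1+1 from by ring, Nat.factorial_succ, Nat.factorial_succ,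
      Nat.factorial_succ]
    push_cast
    push_cast at ih
    linear_combination ((2:ℚ)*d+3) * (2*d+2) * ih


lemma odf_pos (d : ℕ) : 0 < oddDoubleFactorial d :=
  Finset.prod_pos (fun i _ => by omega)

lemma odf_ne (d : ℕ) : (oddDoubleFactorial d : ℚ) ≠ 0 := by
  exact_mod_cast (odf_pos d).ne'

lemma fact_ne (a : ℕ) : ((Nat.factorial a : ℚ)) ≠ 0 := by
  exact_mod_cast (Nat.factorial_pos a).ne'

lemma hcoef (m d : ℕ) :
    (2:ℚ)^(d+1) * (Nat.choose (m+d+1+d) d : ℚ) / (oddDoubleFactorial d : ℚ) * (1/(Nat.factorial m : ℚ))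
      = c (m+d+1) m / (2 * (Nat.factorial (m+d+1) : ℚ)) := by
  have hodf : (oddDoubleFactorial d : ℚ) = (Nat.factorial (2*d+1) : ℚ) / (2^d * (Nat.factorial d)) := by
    rw [eq_div_iff (by positivity)]
    exact odf_eq d
  have h1 : (Nat.choose (m+2*d+1) d) * (Nat.factorial d) * (Nat.factorial (m+d+1)) = Nat.factorial (m+2*d+1) := by
    have := Nat.choose_mul_factorial_mul_factorial (show d ≤ m+2*d+1 by omega)
    rw [show m+2*d+1-d = m+d+1 from by omega] at this
    exact this
  have h2 : (Nat.choose (m+2*d+1) m) * (Nat.factorial m) * (Nat.factorial (2*d+1)) = Nat.factorial (m+2*d+1) := by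
    have := Nat.choose_mul_factorial_mul_factorial (show m ≤ m+2*d+1 by omega)
    rw [show m+2*d+1-m = 2*d+1 from by omega] at this
    exact this
  have h1c : ((Nat.choose (m+2*d+1) d : ℚ)) * (Nat.factorial d) * (Nat.factorial (m+d+1)) = (Nat.factorial (m+2*d+1) : ℚ) := by
    exact_mod_cast congrArg (Nat.cast : ℕ → ℚ) h1
  have h2c : ((Nat.choose (m+2*d+1) m : ℚ)) * (Nat.factorial m) * (Nat.factorial (2*d+1)) = (Nat.factorial (m+2*d+1) : ℚ) := by
    exact_mod_cast congrArg (Nat.cast : ℕ → ℚ) h2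
  rw [hodf]
  rw [show c (m+d+1) m = 2^(2*d+2) * (Nat.choose (m+2*d+1) m : ℚ) from ?_]
  · rw [show m+d+1+d = m+2*d+1 from by omega]
    field_simp
    linear_combination (2:ℚ)^(2*d+2) * h1c - (2:ℚ)^(2*d+2) * h2c
  · rw [c, show 2*(m+d+1)-2*m = 2*d+2 from by omega, show 2*(m+d+1)-1-m = m+2*d+1 from by omega]


end PA

theorem sum_choose_pow_eq_stirling (n k : ℕ) (hn : 0 < n) :
    (1 / (Nat.factorial n : ℚ)) *
        ∑ i ∈ Finset.range n, (Nat.choose (2 * n) (2 * i + 1) : ℚ) * (i : ℚ) ^ k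
      = ∑ d ∈ Finset.range n,
          (2 : ℚ) ^ (d + 1) * (Nat.choose (n + d) d : ℚ) / (oddDoubleFactorial d : ℚ)
            * Stir k (n - 1 - d) := by
  rw [← Finset.sum_range_reflect
    (fun d => (2:ℚ)^(d+1) * (Nat.choose (n+d) d : ℚ) / (oddDoubleFactorial d : ℚ) * Stir k (n-1-d)) n]
  have hstep : ∀ m ∈ range n,
      (2:ℚ)^((n-1-m)+1) * (Nat.choose (n+(n-1-m)) (n-1-m) : ℚ) / (oddDoubleFactorial (n-1-m) : ℚ)
        * Stir k (n-1-(n-1-m))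
      = ∑ j ∈ range n,
          PA.c n m / (2 * (Nat.factorial n : ℚ)) * ((-1:ℚ)^(m-j) * (Nat.choose m j : ℚ)) * (j:ℚ)^k := by
    intro m hm
    rw [mem_range] at hm
    obtain ⟨d, rfl⟩ : ∃ d, n = m + d + 1 := ⟨n - m - 1, by omega⟩
    rw [show m+d+1-1-m = d from by omega, show m+d+1-1-d = m from by omega]
    rw [Stir]
    have hext : ∑ j ∈ Finset.range (m+1), (-1:ℚ)^(m-j) * (Nat.choose m j : ℚ) * (j:ℚ)^k
        = ∑ j ∈ Finset.range (m+d+1), (-1:ℚ)^(m-j) * (Nat.choose m j : ℚ) * (j:ℚ)^k := by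
      apply Finset.sum_subset
      · intro x hx; rw [mem_range] at *; omega
      · intro x hx hnx
        rw [mem_range] at hx hnx
        rw [Nat.choose_eq_zero_of_lt (by omega)]
        simp
    rw [hext, ← mul_assoc, PA.hcoef m d, Finset.mul_sum]
    exact sum_congr rfl fun j _ => by ring
  rw [sum_congr rfl hstep, Finset.sum_comm, Finset.mul_sum]
  refine sum_congr rfl fun j hj => ?_
  rw [mem_range] at hj
  have hkey := PA.key n j hj
  have hre : ∑ m ∈ range n,
      PA.c n m / (2*(Nat.factorial n : ℚ)) * ((-1:ℚ)^(m-j) * (Nat.choose m j : ℚ)) * (j:ℚ)^k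
      = (∑ m ∈ range n, PA.c n m * ((-1:ℚ)^(m-j) * (Nat.choose m j : ℚ)))
          * ((j:ℚ)^k / (2*(Nat.factorial n : ℚ))) := by
    rw [Finset.sum_mul]
    exact sum_congr rfl fun m _ => by ring
  rw [hre, ← hkey]
  have hne : ((Nat.factorial n : ℚ)) ≠ 0 := PA.fact_ne n
  field_simp
end
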